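/- Consider a proximal setup (‖·‖, ω) on Y, with Ω = sqrt(2[max_{y∈Y} ω(y) − min_{y∈Y} ω(y)]). Let u, u' ∈ Y be such that u ∈ Y° minimizes ω over a closed convex subset Y' of Y with u' ∈ Y' (so that ⟨ω'(u), u' − u⟩ ≥ 0), and let g ∈ E satisfy ‖g‖_* ≤ L and ⟨g, u − u'⟩ ≥ ℓ for some ℓ > 0. Then ‖u − u'‖ ≥ ℓ/L and ω(u') − ω(u) ≥ ℓ²/(2L²). Consequently, if u_1, ..., u_T ∈ Y is a sequence such that each consecutive pair (u_τ, u_{τ+1}) satisfies these hypotheses with the same ℓ and L, then T ≤ Ω²L²/ℓ² + 1. -/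

import Mathlib

open RealInnerProductSpace

open Filter

set_option linter.unusedSectionVars false

section NrmFacts

variable {E : Type*} [NormedAddCommGroup E] [InnerProductSpace ℝ E] [FiniteDimensional ℝ E]
variable {nrm : E → ℝ}

theorem nrm_zero' (hnrm_smul : ∀ (c : ℝ) (u : E), nrm (c • u) = |c| * nrm u) :
    nrm 0 = 0 := by
  have := hnrm_smul 0 0
  simpa using this

theorem nrm_nonneg' (hnrm_add : ∀ u v, nrm (u + v) ≤ nrm u + nrm v)
    (hnrm_smul : ∀ (c : ℝ) (u : E), nrm (c • u) = |c| * nrm u) (u : E) :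
    0 ≤ nrm u := by
  have h1 : nrm (u + (-1 : ℝ) • u) ≤ nrm u + nrm ((-1 : ℝ) • u) := hnrm_add u _
  rw [hnrm_smul] at h1
  simp at h1
  have h0 : nrm (0 : E) = 0 := nrm_zero' hnrm_smul
  rw [h0] at h1
  linarith

theorem nrm_neg' (hnrm_smul : ∀ (c : ℝ) (u : E), nrm (c • u) = |c| * nrm u) (u : E) :
    nrm (-u) = nrm u := by
  have := hnrm_smul (-1) u
  simpa using this

theorem nrm_sum_le (hnrm_add : ∀ u v, nrm (u + v) ≤ nrm u + nrm v)
    (hnrm_smul : ∀ (c : ℝ) (u : E), nrm (c • u) = |c| * nrm u)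
    {ι : Type*} (s : Finset ι) (f : ι → E) :
    nrm (∑ i ∈ s, f i) ≤ ∑ i ∈ s, nrm (f i) := by
  classical
  induction s using Finset.induction_on with
  | empty => simp [nrm_zero' hnrm_smul]
  | @insert x s hx ih =>
    rw [Finset.sum_insert hx, Finset.sum_insert hx]
    exact (hnrm_add _ _).trans (by linarith)

theorem nrm_upper (hnrm_add : ∀ u v, nrm (u + v) ≤ nrm u + nrm v)
    (hnrm_smul : ∀ (c : ℝ) (u : E), nrm (c • u) = |c| * nrm u) :
    ∃ C : ℝ, 0 ≤ C ∧ ∀ u, nrm u ≤ C * ‖u‖ := by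
  classical
  set b := Module.finBasis ℝ E with hb
  set C : ℝ := ∑ i, ‖LinearMap.toContinuousLinearMap (b.coord i)‖ * nrm (b i) with hC
  refine ⟨C, ?_, ?_⟩
  · apply Finset.sum_nonneg
    intro i _
    exact mul_nonneg (norm_nonneg _) (nrm_nonneg' hnrm_add hnrm_smul _)
  · intro u
    have hrepr : ∑ i, b.repr u i • b i = u := b.sum_repr u
    calc nrm u = nrm (∑ i, b.repr u i • b i) := by rw [hrepr]
      _ ≤ ∑ i, nrm (b.repr u i • b i) := nrm_sum_le hnrm_add hnrm_smul _ _
      _ ≤ ∑ i, (‖LinearMap.toContinuousLinearMap (b.coord i)‖ * nrm (b i)) * ‖u‖ := by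
          apply Finset.sum_le_sum
          intro i _
          rw [hnrm_smul]
          have h1 : |b.repr u i| ≤ ‖LinearMap.toContinuousLinearMap (b.coord i)‖ * ‖u‖ := by
            have := (LinearMap.toContinuousLinearMap (b.coord i)).le_opNorm u
            simpa [Real.norm_eq_abs, Module.Basis.coord_apply] using this
          have h2 : 0 ≤ nrm (b i) := nrm_nonneg' hnrm_add hnrm_smul _
          calc |b.repr u i| * nrm (b i) ≤ (‖LinearMap.toContinuousLinearMap (b.coord i)‖ * ‖u‖) * nrm (b i) :=
                mul_le_mul_of_nonneg_right h1 h2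
            _ = ‖LinearMap.toContinuousLinearMap (b.coord i)‖ * nrm (b i) * ‖u‖ := by ring
      _ = C * ‖u‖ := by rw [hC, Finset.sum_mul]

theorem nrm_continuous (hnrm_add : ∀ u v, nrm (u + v) ≤ nrm u + nrm v)
    (hnrm_smul : ∀ (c : ℝ) (u : E), nrm (c • u) = |c| * nrm u) :
    Continuous nrm := by
  obtain ⟨C, hC0, hC⟩ := nrm_upper hnrm_add hnrm_smul
  have hlip : ∀ x y : E, |nrm x - nrm y| ≤ C * ‖x - y‖ := by
    intro x y
    have h1 : nrm x ≤ nrm (x - y) + nrm y := by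
      have := hnrm_add (x - y) y
      simpa using this
    have h2 : nrm y ≤ nrm (y - x) + nrm x := by
      have := hnrm_add (y - x) x
      simpa using this
    have h3 : nrm (y - x) = nrm (x - y) := by
      rw [← nrm_neg' hnrm_smul (x - y)]
      congr 1
      abel
    have h4 := hC (x - y)
    rw [h3] at h2
    rw [abs_sub_le_iff]
    exact ⟨by linarith, by linarith⟩
  rw [Metric.continuous_iff]
  intro x ε hε
  refine ⟨ε / (C + 1), by positivity, fun y hy => ?_⟩
  rw [Real.dist_eq]
  calc |nrm y - nrm x| ≤ C * ‖y - x‖ := hlip y x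
    _ < ε := by
        rw [dist_eq_norm] at hy
        have hδ : (0:ℝ) < ε / (C + 1) := by positivity
        have hkey : (C + 1) * (ε / (C + 1)) = ε := by field_simp
        nlinarith [mul_le_mul_of_nonneg_left hy.le hC0, hδ, hkey]

theorem nrm_lower (hnrm_add : ∀ u v, nrm (u + v) ≤ nrm u + nrm v)
    (hnrm_smul : ∀ (c : ℝ) (u : E), nrm (c • u) = |c| * nrm u)
    (hnrm_zero : ∀ u, nrm u = 0 ↔ u = 0) :
    ∃ c : ℝ, 0 < c ∧ ∀ v, c * ‖v‖ ≤ nrm v := by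
  rcases subsingleton_or_nontrivial E with hE | hE
  · refine ⟨1, one_pos, fun v => ?_⟩
    have : v = 0 := Subsingleton.elim v 0
    simp [this, nrm_zero' hnrm_smul]
  · have hsne : (Metric.sphere (0 : E) 1).Nonempty := by
      apply NormedSpace.sphere_nonempty.mpr
      norm_num
    obtain ⟨v₀, hv₀mem, hv₀min⟩ := (isCompact_sphere (0 : E) 1).exists_isMinOn hsne
      (nrm_continuous hnrm_add hnrm_smul).continuousOn
    have hv₀norm : ‖v₀‖ = 1 := by simpa using hv₀mem
    have hv₀ne : v₀ ≠ 0 := by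
      intro h
      rw [h] at hv₀norm
      simp at hv₀norm
    have hc0 : 0 < nrm v₀ := by
      rcases lt_or_eq_of_le (nrm_nonneg' hnrm_add hnrm_smul v₀) with h | h
      · exact h
      · exact absurd ((hnrm_zero v₀).mp h.symm) hv₀ne
    refine ⟨nrm v₀, hc0, fun v => ?_⟩
    rcases eq_or_ne v 0 with rfl | hv
    · simp [nrm_zero' hnrm_smul]
    · have hvn : 0 < ‖v‖ := norm_pos_iff.mpr hv
      have hwmem : ‖v‖⁻¹ • v ∈ Metric.sphere (0 : E) 1 := by
        simp [norm_smul, abs_of_pos (inv_pos.mpr hvn), inv_mul_cancel₀ hvn.ne']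
      have hmin : nrm v₀ ≤ nrm (‖v‖⁻¹ • v) := hv₀min hwmem
      have heq : nrm (‖v‖⁻¹ • v) = ‖v‖⁻¹ * nrm v := by
        rw [hnrm_smul, abs_of_pos (inv_pos.mpr hvn)]
      rw [heq] at hmin
      have := mul_le_mul_of_nonneg_right hmin hvn.le
      calc nrm v₀ * ‖v‖ ≤ ‖v‖⁻¹ * nrm v * ‖v‖ := this
        _ = nrm v := by field_simp

end NrmFacts


theorem exists_subgradient' {F : Type*} [NormedAddCommGroup F] [InnerProductSpace ℝ F]
    [FiniteDimensional ℝ F] {s : Set F} (hs : Convex ℝ s) {f : F → ℝ}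
    (hf : ConvexOn ℝ s f) (hfc : ContinuousOn f (interior s)) {x : F} (hx : x ∈ interior s) :
    ∃ g : F, ∀ z ∈ s, f x + ⟪g, z - x⟫ ≤ f z := by
  haveI : CompleteSpace F := FiniteDimensional.complete ℝ F
  set S : Set (F × ℝ) := {p | p.1 ∈ interior s ∧ f p.1 < p.2} with hS
  have hfint : ConvexOn ℝ (interior s) f := hf.subset interior_subset hs.interior
  -- S is convex
  have hSconv : Convex ℝ S := by
    rintro ⟨p1, p2⟩ ⟨hp1, hp2⟩ ⟨q1, q2⟩ ⟨hq1, hq2⟩ a b ha hb hab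
    refine ⟨hs.interior hp1 hq1 ha hb hab, ?_⟩
    show f (a • p1 + b • q1) < a * p2 + b * q2
    have h1 : f (a • p1 + b • q1) ≤ a * f p1 + b * f q1 := hfint.2 hp1 hq1 ha hb hab
    rcases eq_or_lt_of_le ha with rfl | ha'
    · have hb1 : b = 1 := by linarith
      subst hb1
      simp only [zero_smul, zero_add, one_smul, zero_mul, one_mul] at h1 ⊢
      linarith
    · have h2 : a * f p1 < a * p2 := (mul_lt_mul_iff_right₀ ha').mpr hp2
      have h3 : b * f q1 ≤ b * q2 := mul_le_mul_of_nonneg_left hq2.le hb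
      linarith
  -- S is open
  have hSopen : IsOpen S := by
    have hcont : ContinuousOn (fun p : F × ℝ => p.2 - f p.1) (interior s ×ˢ (Set.univ : Set ℝ)) := by
      apply ContinuousOn.sub
      · exact continuous_snd.continuousOn
      · exact hfc.comp continuous_fst.continuousOn (fun p hp => hp.1)
    have := hcont.isOpen_inter_preimage (isOpen_interior.prod isOpen_univ) (isOpen_Ioi (a := (0:ℝ)))
    convert this using 1
    ext ⟨p1, p2⟩
    simp only [hS, Set.mem_setOf_eq, Set.mem_inter_iff, Set.mem_prod, Set.mem_univ, and_true,
      Set.mem_preimage, Set.mem_Ioi]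
    constructor
    · rintro ⟨h1, h2⟩; exact ⟨h1, by linarith⟩
    · rintro ⟨h1, h2⟩; exact ⟨h1, by linarith⟩
  have hxS : ((x, f x) : F × ℝ) ∉ S := by
    rintro ⟨-, h⟩
    exact lt_irrefl _ h
  obtain ⟨φ, hφ⟩ := geometric_hahn_banach_open_point hSconv hSopen hxS
  set c : ℝ := φ (0, 1) with hc
  have hdec : ∀ (y : F) (r : ℝ), φ (y, r) = φ (y, 0) + r * c := by
    intro y r
    have : ((y, r) : F × ℝ) = (y, 0) + r • ((0 : F), (1 : ℝ)) := by
      simp [Prod.ext_iff]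
    rw [this, map_add, map_smul, smul_eq_mul, hc]
  have hcneg : c < 0 := by
    have h1 := hφ (x, f x + 1) ⟨hx, by norm_num⟩
    rw [hdec x (f x + 1), hdec x (f x)] at h1
    linarith
  have hkey : ∀ z ∈ interior s, φ (z, 0) + f z * c ≤ φ (x, 0) + f x * c := by
    intro z hz
    by_contra hcon
    push_neg at hcon
    set A := φ (z, 0) + f z * c with hA
    set K := φ (x, 0) + f x * c with hK
    have hAK : K < A := hcon
    set ε : ℝ := (A - K) / (-2 * c) with hε
    have hεpos : 0 < ε := div_pos (by linarith) (by linarith)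
    have h2 := hφ (z, f z + ε) ⟨hz, by simpa using hεpos⟩
    rw [hdec z (f z + ε), hdec x (f x)] at h2
    have hεc : ε * c = -(A - K) / 2 := by
      have hc0 : c ≠ 0 := hcneg.ne
      rw [hε]
      field_simp
    have h3 : A + ε * c < K := by
      rw [hA, hK]
      ring_nf at h2 ⊢
      linarith
    rw [hεc] at h3
    linarith
  -- build the subgradient from the linear functional
  set ψ : F →L[ℝ] ℝ := φ.comp (ContinuousLinearMap.inl ℝ F ℝ) with hψ
  have hψap : ∀ y : F, ψ y = φ (y, 0) := by
    intro y
    simp [hψ]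
  set g : F := (InnerProductSpace.toDual ℝ F).symm ((-c)⁻¹ • ψ) with hg
  have hgap : ∀ v : F, ⟪g, v⟫ = (-c)⁻¹ * ψ v := by
    intro v
    rw [hg, InnerProductSpace.toDual_symm_apply]
    simp
  have hcpos : 0 < -c := by linarith
  -- subgradient inequality on the interior
  have hgrad_int : ∀ z ∈ interior s, f x + ⟪g, z - x⟫ ≤ f z := by
    intro z hz
    have h1 := hkey z hz
    rw [← hψap, ← hψap] at h1
    have h2 : ⟪g, z - x⟫ = (-c)⁻¹ * (ψ z - ψ x) := by
      rw [hgap, map_sub]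
    have h3 : (-c)⁻¹ * (ψ z - ψ x) ≤ f z - f x := by
      rw [inv_mul_le_iff₀ hcpos]
      nlinarith [h1]
    rw [h2]
    linarith
  -- extend to all of s through midpoints
  refine ⟨g, fun z hz => ?_⟩
  have hmeq : z + (2⁻¹ : ℝ) • (x - z) = x + (2⁻¹ : ℝ) • (z - x) := by module
  have hm : x + (2⁻¹ : ℝ) • (z - x) ∈ interior s := by
    rw [← hmeq]
    exact hs.add_smul_sub_mem_interior hz hx ⟨by norm_num, by norm_num⟩
  have h4 := hgrad_int _ hm
  have h5 : ⟪g, (x + (2⁻¹ : ℝ) • (z - x)) - x⟫ = 2⁻¹ * ⟪g, z - x⟫ := by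
    rw [add_sub_cancel_left, real_inner_smul_right]
  have hmcomb : x + (2⁻¹ : ℝ) • (z - x) = (2⁻¹ : ℝ) • x + (2⁻¹ : ℝ) • z := by module
  have hconv := hf.2 (interior_subset hx) hz (by norm_num : (0:ℝ) ≤ 2⁻¹)
    (by norm_num : (0:ℝ) ≤ 2⁻¹) (by norm_num)
  rw [← hmcomb] at hconv
  simp only [smul_eq_mul] at hconv
  rw [h5] at h4
  linarith


theorem sum_range_cast_real (n : ℕ) : ∑ i ∈ Finset.range n, (i : ℝ) = n * (n - 1) / 2 := by
  induction n with
  | zero => simp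
  | succ k ih =>
    rw [Finset.sum_range_succ, ih]
    push_cast
    ring

theorem taylor_aux {E : Type*} [NormedAddCommGroup E] [InnerProductSpace ℝ E]
    (Y Yo : Set E) (hYoY : Yo ⊆ Y)
    (nrm : E → ℝ) (hnrm_smul : ∀ (c : ℝ) (u : E), nrm (c • u) = |c| * nrm u)
    (ω : E → ℝ) (ω' : E → E)
    (hω'sub : ∀ y ∈ Yo, ∀ z ∈ Y, ω y + ⟪ω' y, z - y⟫ ≤ ω z)
    (hstrong : ∀ y ∈ Yo, ∀ y' ∈ Yo, nrm (y - y') ^ 2 ≤ ⟪ω' y - ω' y', y - y'⟫)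
    (a b : E) (hseg : ∀ t : ℝ, t ∈ Set.Icc (0:ℝ) 1 → a + t • (b - a) ∈ Yo) :
    ω a + ⟪ω' a, b - a⟫ + nrm (b - a) ^ 2 / 2 ≤ ω b := by
  set z : ℝ → E := fun t => a + t • (b - a) with hzdef
  set M : ℝ := nrm (b - a) ^ 2 with hMdef
  set c : ℝ → ℝ := fun t => ⟪ω' (z t), b - a⟫ with hcdef
  have hz0 : z 0 = a := by simp [hzdef]
  have hz1 : z 1 = b := by simp [hzdef]
  have hzsub : ∀ s t : ℝ, z s - z t = (s - t) • (b - a) := by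
    intro s t
    simp only [hzdef, add_sub_add_left_eq_sub, ← sub_smul]
  have hsub : ∀ t ∈ Set.Icc (0:ℝ) 1, ∀ s ∈ Set.Icc (0:ℝ) 1,
      ω (z t) + (s - t) * c t ≤ ω (z s) := by
    intro t ht s hs
    have h := hω'sub (z t) (hseg t ht) (z s) (hYoY (hseg s hs))
    rw [hzsub s t, real_inner_smul_right] at h
    exact h
  have hmono : ∀ t ∈ Set.Icc (0:ℝ) 1, t * M ≤ c t - c 0 := by
    intro t ht
    rcases eq_or_lt_of_le ht.1 with h0 | h0
    · rw [← h0]; simp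
    · have h := hstrong (z t) (hseg t ht) (z 0) (hseg 0 ⟨le_refl 0, zero_le_one⟩)
      rw [hzsub t 0, sub_zero] at h
      have hlhs : nrm (t • (b - a)) ^ 2 = t * (t * M) := by
        rw [hnrm_smul, abs_of_pos h0, hMdef]
        ring
      have hrhs : ⟪ω' (z t) - ω' (z 0), t • (b - a)⟫ = t * (c t - c 0) := by
        rw [real_inner_smul_right, inner_sub_left]
      rw [hlhs, hrhs] at h
      exact le_of_mul_le_mul_left h h0
  have hM0 : 0 ≤ M := by rw [hMdef]; positivity
  have hkey : ∀ n : ℕ, 1 ≤ n → ω a + c 0 + M / 2 - M / (2 * n) ≤ ω b := by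
    intro n hn
    have hnR : (0:ℝ) < n := by exact_mod_cast hn
    set F : ℕ → ℝ := fun i => ω (z (i / n)) with hFdef
    have hmem : ∀ i : ℕ, i ≤ n → ((i:ℝ)/n) ∈ Set.Icc (0:ℝ) 1 := by
      intro i hi
      constructor
      · positivity
      · rw [div_le_one hnR]; exact_mod_cast hi
    have hstep : ∀ i : ℕ, i < n → (1/(n:ℝ)) * (c 0 + ((i:ℝ)/n) * M) ≤ F (i+1) - F i := by
      intro i hi
      have hmem1 : (((i:ℝ)+1)/n) ∈ Set.Icc (0:ℝ) 1 := by
        have := hmem (i+1) hi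
        push_cast at this
        exact this
      have h1 := hsub ((i:ℝ)/n) (hmem i hi.le) (((i:ℝ)+1)/n) hmem1
      have hd : ((i:ℝ)+1)/n - (i:ℝ)/n = 1/n := by field_simp; ring
      rw [hd] at h1
      have h2 := hmono ((i:ℝ)/n) (hmem i hi.le)
      have h3 : (1/(n:ℝ)) * (c 0 + ((i:ℝ)/n) * M) ≤ (1/(n:ℝ)) * c ((i:ℝ)/n) := by
        apply mul_le_mul_of_nonneg_left _ (by positivity)
        linarith
      show (1/(n:ℝ)) * (c 0 + ((i:ℝ)/n) * M) ≤ ω (z ((↑(i+1):ℝ)/n)) - ω (z ((↑i:ℝ)/n))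
      push_cast
      linarith
    have htel : ∑ i ∈ Finset.range n, (F (i+1) - F i) = F n - F 0 := Finset.sum_range_sub F n
    have hlb : ∑ i ∈ Finset.range n, (1/(n:ℝ)) * (c 0 + ((i:ℝ)/n) * M) ≤ F n - F 0 := by
      rw [← htel]
      apply Finset.sum_le_sum
      intro i hi
      exact hstep i (Finset.mem_range.mp hi)
    have hsum : ∑ i ∈ Finset.range n, (1/(n:ℝ)) * (c 0 + ((i:ℝ)/n) * M)
        = c 0 + M/2 - M/(2*n) := by
      have h4 : ∀ i ∈ Finset.range n, (1/(n:ℝ)) * (c 0 + ((i:ℝ)/n) * M)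
          = (1/(n:ℝ)) * c 0 + (M/(n:ℝ)^2) * (i:ℝ) := by
        intro i _
        field_simp
      rw [Finset.sum_congr rfl h4, Finset.sum_add_distrib, Finset.sum_const, ← Finset.mul_sum,
        sum_range_cast_real, Finset.card_range, nsmul_eq_mul]
      field_simp
      ring
    have hF0 : F 0 = ω a := by
      show ω (z ((0:ℕ) / n)) = ω a
      norm_num [hz0]
    have hFn : F n = ω b := by
      show ω (z ((n:ℝ) / n)) = ω b
      rw [div_self hnR.ne', hz1]
    rw [hsum] at hlb
    rw [hF0, hFn] at hlb
    linarith
  have hM2 : Tendsto (fun n : ℕ => M / (2 * (n:ℝ))) atTop (nhds 0) := by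
    have heq : (fun n : ℕ => M / (2 * (n:ℝ))) = fun n : ℕ => (M/2) * (1/(n:ℝ)) := by
      funext n
      rw [← div_div, div_eq_mul_one_div]
    rw [heq]
    simpa using tendsto_one_div_atTop_nhds_zero_nat.const_mul (M/2)
  have hlim : Tendsto (fun n : ℕ => ω a + c 0 + M/2 - M/(2*(n:ℝ))) atTop
      (nhds (ω a + c 0 + M/2)) := by
    simpa using tendsto_const_nhds.sub hM2
  have hfinal : ω a + c 0 + M/2 ≤ ω b :=
    le_of_tendsto hlim (Filter.eventually_atTop.mpr ⟨1, hkey⟩)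
  have hc0 : c 0 = ⟪ω' a, b - a⟫ := by rw [hcdef]; simp only [hz0]
  rw [hc0] at hfinal
  exact hfinal

theorem combo_aux {E : Type*} [NormedAddCommGroup E] [InnerProductSpace ℝ E]
    (Y Yo : Set E) (hYoY : Yo ⊆ Y)
    (nrm : E → ℝ) (hnrm_smul : ∀ (c : ℝ) (u : E), nrm (c • u) = |c| * nrm u)
    (ω : E → ℝ) (ω' : E → E)
    (hω'sub : ∀ y ∈ Yo, ∀ z ∈ Y, ω y + ⟪ω' y, z - y⟫ ≤ ω z)
    (hstrong : ∀ y ∈ Yo, ∀ y' ∈ Yo, nrm (y - y') ^ 2 ≤ ⟪ω' y - ω' y', y - y'⟫)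
    (a b : E) (hseg : ∀ t : ℝ, t ∈ Set.Icc (0:ℝ) 1 → a + t • (b - a) ∈ Yo)
    {t : ℝ} (ht : t ∈ Set.Icc (0:ℝ) 1) :
    ω (a + t • (b - a)) + t * (1 - t) * nrm (b - a) ^ 2 / 2
      ≤ (1 - t) * ω a + t * ω b := by
  obtain ⟨ht0, ht1⟩ := ht
  set zt : E := a + t • (b - a) with hzt
  set M : ℝ := nrm (b - a) ^ 2 with hM
  set d : ℝ := ⟪ω' zt, b - a⟫ with hd
  -- segment from zt to b
  have hseg1 : ∀ s : ℝ, s ∈ Set.Icc (0:ℝ) 1 → zt + s • (b - zt) ∈ Yo := by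
    intro s hs
    have heq : zt + s • (b - zt) = a + (t + s * (1 - t)) • (b - a) := by
      rw [hzt]
      module
    rw [heq]
    apply hseg
    constructor
    · nlinarith [hs.1, hs.2]
    · nlinarith [hs.1, hs.2]
  -- segment from zt to a
  have hseg2 : ∀ s : ℝ, s ∈ Set.Icc (0:ℝ) 1 → zt + s • (a - zt) ∈ Yo := by
    intro s hs
    have heq : zt + s • (a - zt) = a + (t * (1 - s)) • (b - a) := by
      rw [hzt]
      module
    rw [heq]
    apply hseg
    constructor
    · nlinarith [hs.1, hs.2]
    · nlinarith [hs.1, hs.2]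
  have h1 := taylor_aux Y Yo hYoY nrm hnrm_smul ω ω' hω'sub hstrong zt b hseg1
  have h2 := taylor_aux Y Yo hYoY nrm hnrm_smul ω ω' hω'sub hstrong zt a hseg2
  have hb_zt : b - zt = (1 - t) • (b - a) := by rw [hzt]; module
  have ha_zt : a - zt = (-t) • (b - a) := by rw [hzt]; module
  have hib : ⟪ω' zt, b - zt⟫ = (1 - t) * d := by rw [hb_zt, real_inner_smul_right]
  have hia : ⟪ω' zt, a - zt⟫ = (-t) * d := by rw [ha_zt, real_inner_smul_right]
  have hnb : nrm (b - zt) ^ 2 = (1 - t)^2 * M := by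
    rw [hb_zt, hnrm_smul, abs_of_nonneg (by linarith : (0:ℝ) ≤ 1 - t), hM]
    ring
  have hna : nrm (a - zt) ^ 2 = t^2 * M := by
    rw [ha_zt, hnrm_smul, abs_neg, abs_of_nonneg ht0, hM]
    ring
  rw [hib, hnb] at h1
  rw [hia, hna] at h2
  -- t * h1 + (1-t) * h2
  have h1' := mul_le_mul_of_nonneg_left h1 ht0
  have h2' := mul_le_mul_of_nonneg_left h2 (by linarith : (0:ℝ) ≤ 1 - t)
  nlinarith [h1', h2']
theorem key_gap {E : Type*} [NormedAddCommGroup E] [InnerProductSpace ℝ E]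
    [FiniteDimensional ℝ E]
    (Y : Set E) (hYne : Y.Nonempty) (hYcv : Convex ℝ Y)
    (nrm : E → ℝ) (hnrm_smul : ∀ (c : ℝ) (u : E), nrm (c • u) = |c| * nrm u)
    (ω : E → ℝ) (hωcont : ContinuousOn ω Y) (hωconv : ConvexOn ℝ Y ω)
    (Yo : Set E) (hYo : Yo = {y ∈ Y | ∃ s : E, ∀ z ∈ Y, ω y + ⟪s, z - y⟫ ≤ ω z})
    (ω' : E → E)
    (hω'sub : ∀ y ∈ Yo, ∀ z ∈ Y, ω y + ⟪ω' y, z - y⟫ ≤ ω z)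
    (hstrong : ∀ y ∈ Yo, ∀ y' ∈ Yo, nrm (y - y') ^ 2 ≤ ⟪ω' y - ω' y', y - y'⟫)
    (Y' : Set E) (hY'cv : Convex ℝ Y') (hY'Y : Y' ⊆ Y)
    (u u' : E) (hu : u ∈ Y') (hu' : u' ∈ Y') (humin : IsMinOn ω Y' u) :
    nrm (u' - u) ^ 2 / 2 ≤ ω u' - ω u := by
  have hYoY : Yo ⊆ Y := by rw [hYo]; rintro y ⟨hy, -⟩; exact hy
  have huY : u ∈ Y := hY'Y hu
  have hu'Y : u' ∈ Y := hY'Y hu'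
  obtain ⟨x₀, hx₀⟩ := hYne
  have hmemV : ∀ y ∈ Y, y - x₀ ∈ vectorSpan ℝ Y := fun y hy => by
    simpa [vsub_eq_sub] using vsub_mem_vectorSpan ℝ hy hx₀
  set V : Submodule ℝ E := vectorSpan ℝ Y with hV
  set s : Set V := {v : V | x₀ + (v : E) ∈ Y} with hsdef
  -- a helper for affine combinations
  have hcombo : ∀ (α β : ℝ), α + β = 1 → ∀ v w : V,
      x₀ + ((α • v + β • w : V) : E) = α • (x₀ + (v:E)) + β • (x₀ + (w:E)) := by
    intro α β hαβ v w
    have h1 : α • x₀ + β • x₀ = x₀ := by rw [← add_smul, hαβ, one_smul]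
    have h2 : x₀ + ((α • v + β • w : V) : E)
        = (α • x₀ + β • x₀) + (α • (v:E) + β • (w:E)) := by
      rw [h1]
      simp [Submodule.coe_add, Submodule.coe_smul]
    rw [h2]
    module
  have hsc : Convex ℝ s := by
    intro v hv w hw α β hα hβ hαβ
    show x₀ + ((α • v + β • w : V) : E) ∈ Y
    rw [hcombo α β hαβ v w]
    exact hYcv hv hw hα hβ hαβ
  have h0s : (0 : V) ∈ s := by
    show x₀ + ((0 : V) : E) ∈ Y
    simpa using hx₀
  have hspan : vectorSpan ℝ s = ⊤ := by
    rw [Submodule.eq_top_iff']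
    intro w
    have hw : (w : E) ∈ vectorSpan ℝ Y := w.2
    have hle : vectorSpan ℝ Y ≤ (vectorSpan ℝ s).map V.subtype := by
      apply Submodule.span_le.mpr
      rintro x hx
      rw [Set.mem_vsub] at hx
      obtain ⟨y1, hy1, y2, hy2, rfl⟩ := hx
      refine Submodule.mem_map.mpr
        ⟨⟨y1 - x₀, hmemV y1 hy1⟩ - ⟨y2 - x₀, hmemV y2 hy2⟩, ?_, ?_⟩
      · have hm1 : (⟨y1 - x₀, hmemV y1 hy1⟩ : V) ∈ s := by
          show x₀ + (y1 - x₀) ∈ Y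
          simpa using hy1
        have hm2 : (⟨y2 - x₀, hmemV y2 hy2⟩ : V) ∈ s := by
          show x₀ + (y2 - x₀) ∈ Y
          simpa using hy2
        simpa [vsub_eq_sub] using vsub_mem_vectorSpan ℝ hm1 hm2
      · show (((⟨y1 - x₀, _⟩ - ⟨y2 - x₀, _⟩ : V)) : E) = y1 -ᵥ y2
        push_cast [vsub_eq_sub]
        abel
    obtain ⟨w', hw', hww⟩ := Submodule.mem_map.mp (hle hw)
    have hww' : w' = w := Subtype.coe_injective (by simpa using hww)
    exact hww' ▸ hw'
  have haff : affineSpan ℝ s = ⊤ :=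
    (AffineSubspace.affineSpan_eq_top_iff_vectorSpan_eq_top_of_nonempty ℝ ↥V ↥V ⟨0, h0s⟩).mpr hspan
  have hint : (interior s).Nonempty := by
    rw [Convex.interior_nonempty_iff_affineSpan_eq_top hsc]
    exact haff
  set f : V → ℝ := fun v => ω (x₀ + (v : E)) with hfdef
  have hfconv : ConvexOn ℝ s f := by
    refine ⟨hsc, ?_⟩
    intro v hv w hw α β hα hβ hαβ
    show ω (x₀ + ((α • v + β • w : V) : E)) ≤ α • ω (x₀ + (v:E)) + β • ω (x₀ + (w:E))
    rw [hcombo α β hαβ v w]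
    exact hωconv.2 hv hw hα hβ hαβ
  have hfcont : ContinuousOn f s := by
    apply hωcont.comp
    · exact (continuous_const.add continuous_subtype_val).continuousOn
    · intro v hv
      exact hv
  have hYosup : ∀ v : V, v ∈ interior s → x₀ + (v : E) ∈ Yo := by
    intro v hv
    obtain ⟨gv, hgv⟩ := exists_subgradient' hsc hfconv (hfcont.mono interior_subset) hv
    rw [hYo]
    have hvs : v ∈ s := interior_subset hv
    refine ⟨hvs, ⟨(gv : E), fun z hz => ?_⟩⟩
    have hzs : (⟨z - x₀, hmemV z hz⟩ : V) ∈ s := by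
      show x₀ + (z - x₀) ∈ Y
      simpa using hz
    have h := hgv _ hzs
    have hfz : f ⟨z - x₀, hmemV z hz⟩ = ω z := by
      show ω (x₀ + (z - x₀)) = ω z
      congr 1
      abel
    have hinner : ⟪gv, (⟨z - x₀, hmemV z hz⟩ : V) - v⟫ = ⟪(gv:E), z - (x₀ + (v:E))⟫ := by
      rw [Submodule.coe_inner]
      congr 1
      push_cast
      abel
    rw [hfz, hinner] at h
    exact h
  obtain ⟨v₀, hv₀⟩ := hint
  set w₀ : E := x₀ + (v₀ : E) with hw₀def
  have hv₀coe : (v₀ : E) = w₀ - x₀ := by rw [hw₀def]; abel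
  have hw₀Y : w₀ ∈ Y := by
    have h : v₀ ∈ s := interior_subset hv₀
    exact h
  have hmapY : ∀ y (hy : y ∈ Y), (⟨y - x₀, hmemV y hy⟩ : V) ∈ s := by
    intro y hy
    show x₀ + (y - x₀) ∈ Y
    simpa using hy
  have hYoYsub := hYoY
  -- main per-ε inequality
  have hmain : ∀ ε : ℝ, 0 < ε → ε ≤ 1 → ∀ t ∈ Set.Icc (0:ℝ) 1,
      ω ((u + ε • (w₀ - u)) + t • ((u' + ε • (w₀ - u')) - (u + ε • (w₀ - u))))
        + t * (1 - t) * nrm ((u' + ε • (w₀ - u')) - (u + ε • (w₀ - u))) ^ 2 / 2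
        ≤ (1 - t) * ω (u + ε • (w₀ - u)) + t * ω (u' + ε • (w₀ - u')) := by
    intro ε hε hε1 t ht
    apply combo_aux Y Yo hYoY nrm hnrm_smul ω ω' hω'sub hstrong _ _ _ ht
    intro τ hτ
    set vu : V := ⟨u - x₀, hmemV u huY⟩ with hvu
    set vu' : V := ⟨u' - x₀, hmemV u' hu'Y⟩ with hvu'
    set va : V := vu + ε • (v₀ - vu) with hva
    set vb : V := vu' + ε • (v₀ - vu') with hvb
    have hvaint : va ∈ interior s :=
      hsc.add_smul_sub_mem_interior (hmapY u huY) hv₀ ⟨hε, hε1⟩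
    have hvbint : vb ∈ interior s :=
      hsc.add_smul_sub_mem_interior (hmapY u' hu'Y) hv₀ ⟨hε, hε1⟩
    have hvτint : va + τ • (vb - va) ∈ interior s :=
      hsc.interior.add_smul_sub_mem hvaint hvbint hτ
    have h := hYosup _ hvτint
    have heq : x₀ + ((va + τ • (vb - va) : V) : E)
        = (u + ε • (w₀ - u)) + τ • ((u' + ε • (w₀ - u')) - (u + ε • (w₀ - u))) := by
      simp only [hva, hvb, hvu, hvu', Submodule.coe_add, Submodule.coe_smul,
        Submodule.coe_sub, hv₀coe]
      module
    rw [heq] at h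
    exact h
  set N2 : ℝ := nrm (u' - u) ^ 2 with hN2
  have hT : ∀ t : ℝ, 0 < t → t < 1 → (1 - t) * N2 / 2 ≤ ω u' - ω u := by
    intro t ht0 ht1
    set e : ℕ → ℝ := fun n => 1 / ((n : ℝ) + 2) with he
    have hepos : ∀ n, 0 < e n := fun n => by positivity
    have hele : ∀ n, e n ≤ 1 := by
      intro n
      rw [he]
      rw [div_le_one (by positivity)]
      have : (0:ℝ) ≤ (n:ℝ) := Nat.cast_nonneg n
      linarith
    have helim : Filter.Tendsto e Filter.atTop (nhds 0) := by
      have h1 : Filter.Tendsto (fun n : ℕ => ((n : ℝ) + 2)) Filter.atTop Filter.atTop :=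
        Filter.tendsto_atTop_add_const_right _ 2 tendsto_natCast_atTop_atTop
      have h2 := h1.inv_tendsto_atTop
      simpa [he, one_div, Pi.inv_def] using h2
    set A : ℕ → E := fun n => u + e n • (w₀ - u) with hA
    set B : ℕ → E := fun n => u' + e n • (w₀ - u') with hB
    set Z : ℕ → E := fun n => A n + t • (B n - A n) with hZ
    have hAY : ∀ n, A n ∈ Y := fun n =>
      hYcv.add_smul_sub_mem huY hw₀Y ⟨(hepos n).le, hele n⟩
    have hBY : ∀ n, B n ∈ Y := fun n =>
      hYcv.add_smul_sub_mem hu'Y hw₀Y ⟨(hepos n).le, hele n⟩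
    have hZY : ∀ n, Z n ∈ Y := fun n =>
      hYcv.add_smul_sub_mem (hAY n) (hBY n) ⟨ht0.le, ht1.le⟩
    have hBA : ∀ n, B n - A n = (1 - e n) • (u' - u) := by
      intro n
      simp only [hA, hB]
      module
    have hineq : ∀ n, ω (Z n) + t * (1 - t) * ((1 - e n)^2 * N2) / 2
        ≤ (1 - t) * ω (A n) + t * ω (B n) := by
      intro n
      have h := hmain (e n) (hepos n) (hele n) t ⟨ht0.le, ht1.le⟩
      have hnrmBA : nrm (B n - A n) ^ 2 = (1 - e n)^2 * N2 := by
        rw [hBA n, hnrm_smul, abs_of_nonneg (by linarith [hele n] : (0:ℝ) ≤ 1 - e n), hN2]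
        ring
      rw [← hnrmBA]
      exact h
    -- limits
    have hAl : Filter.Tendsto A Filter.atTop (nhds u) := by
      have := helim.smul_const (w₀ - u)
      simpa [hA] using (tendsto_const_nhds (x := u)).add this
    have hBl : Filter.Tendsto B Filter.atTop (nhds u') := by
      have := helim.smul_const (w₀ - u')
      simpa [hB] using (tendsto_const_nhds (x := u')).add this
    set zt : E := u + t • (u' - u) with hzt
    have hztY' : zt ∈ Y' := hY'cv.add_smul_sub_mem hu hu' ⟨ht0.le, ht1.le⟩
    have hztY : zt ∈ Y := hY'Y hztY'
    have hZl : Filter.Tendsto Z Filter.atTop (nhds zt) := by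
      have h1 := (hBl.sub hAl).const_smul t
      simpa [hZ, hzt] using hAl.add h1
    have hωA : Filter.Tendsto (fun n => ω (A n)) Filter.atTop (nhds (ω u)) :=
      ((hωcont u huY).tendsto).comp
        (tendsto_nhdsWithin_iff.mpr ⟨hAl, Filter.Eventually.of_forall hAY⟩)
    have hωB : Filter.Tendsto (fun n => ω (B n)) Filter.atTop (nhds (ω u')) :=
      ((hωcont u' hu'Y).tendsto).comp
        (tendsto_nhdsWithin_iff.mpr ⟨hBl, Filter.Eventually.of_forall hBY⟩)
    have hωZ : Filter.Tendsto (fun n => ω (Z n)) Filter.atTop (nhds (ω zt)) :=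
      ((hωcont zt hztY).tendsto).comp
        (tendsto_nhdsWithin_iff.mpr ⟨hZl, Filter.Eventually.of_forall hZY⟩)
    have h1e : Filter.Tendsto (fun n => 1 - e n) Filter.atTop (nhds 1) := by
      simpa using (tendsto_const_nhds (x := (1:ℝ))).sub helim
    have h2e : Filter.Tendsto (fun n => t * (1 - t) * ((1 - e n)^2 * N2) / 2)
        Filter.atTop (nhds (t * (1 - t) * ((1:ℝ)^2 * N2) / 2)) := by
      apply Filter.Tendsto.div_const
      apply Filter.Tendsto.const_mul
      exact (h1e.pow 2).mul_const N2
    have hle := le_of_tendsto_of_tendsto' (hωZ.add h2e)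
      ((hωA.const_mul (1 - t)).add (hωB.const_mul t)) hineq
    have hmin : ω u ≤ ω zt := isMinOn_iff.mp humin zt hztY'
    apply le_of_mul_le_mul_left _ ht0
    nlinarith [hle, hmin]
  -- finally let t → 0
  have hTlim : Filter.Tendsto (fun n : ℕ => (1 - 1/((n:ℝ) + 2)) * N2 / 2)
      Filter.atTop (nhds (((1:ℝ) - 0) * N2 / 2)) := by
    apply Filter.Tendsto.div_const
    apply Filter.Tendsto.mul_const
    apply Filter.Tendsto.const_sub
    have h1 : Filter.Tendsto (fun n : ℕ => ((n : ℝ) + 2)) Filter.atTop Filter.atTop :=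
      Filter.tendsto_atTop_add_const_right _ 2 tendsto_natCast_atTop_atTop
    simpa [one_div, Pi.inv_def] using h1.inv_tendsto_atTop
  have hfin : ((1:ℝ) - 0) * N2 / 2 ≤ ω u' - ω u := by
    apply le_of_tendsto hTlim
    apply Filter.Eventually.of_forall
    intro n
    apply hT
    · positivity
    · rw [div_lt_one (by positivity)]
      have : (0:ℝ) ≤ (n:ℝ) := Nat.cast_nonneg n
      linarith
  rw [hN2] at hfin
  linarith

theorem step_lemma {E : Type*} [NormedAddCommGroup E] [InnerProductSpace ℝ E]
    [FiniteDimensional ℝ E]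
    (Y : Set E) (hYne : Y.Nonempty) (hYcv : Convex ℝ Y)
    (nrm : E → ℝ)
    (hnrm_add : ∀ u v, nrm (u + v) ≤ nrm u + nrm v)
    (hnrm_smul : ∀ (c : ℝ) (u : E), nrm (c • u) = |c| * nrm u)
    (hnrm_zero : ∀ u, nrm u = 0 ↔ u = 0)
    (dnrm : E → ℝ)
    (hdnrm : ∀ ξ : E, dnrm ξ = sSup {r : ℝ | ∃ u : E, nrm u ≤ 1 ∧ r = ⟪ξ, u⟫})
    (ω : E → ℝ) (hωcont : ContinuousOn ω Y) (hωconv : ConvexOn ℝ Y ω)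
    (Yo : Set E) (hYo : Yo = {y ∈ Y | ∃ s : E, ∀ z ∈ Y, ω y + ⟪s, z - y⟫ ≤ ω z})
    (ω' : E → E)
    (hω'sub : ∀ y ∈ Yo, ∀ z ∈ Y, ω y + ⟪ω' y, z - y⟫ ≤ ω z)
    (hstrong : ∀ y ∈ Yo, ∀ y' ∈ Yo, nrm (y - y') ^ 2 ≤ ⟪ω' y - ω' y', y - y'⟫)
    (L ℓ : ℝ) (hℓ : 0 < ℓ)
    (Y' : Set E) (hY'cv : Convex ℝ Y') (hY'Y : Y' ⊆ Y)
    (u u' : E) (hu : u ∈ Y') (hu' : u' ∈ Y')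
    (humin : IsMinOn ω Y' u)
    (g : E) (hgL : dnrm g ≤ L) (hgℓ : ℓ ≤ ⟪g, u - u'⟫) :
    0 < L ∧ ℓ / L ≤ nrm (u - u') ∧ ℓ ^ 2 / (2 * L ^ 2) ≤ ω u' - ω u := by
  have hnonneg := nrm_nonneg' hnrm_add hnrm_smul
  -- the dual pairing bound
  have hbdd : BddAbove {r : ℝ | ∃ v : E, nrm v ≤ 1 ∧ r = ⟪g, v⟫} := by
    obtain ⟨c, hc, hcl⟩ := nrm_lower hnrm_add hnrm_smul hnrm_zero
    refine ⟨‖g‖ * (1/c), ?_⟩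
    rintro r ⟨v, hv, rfl⟩
    have h1 : c * ‖v‖ ≤ 1 := le_trans (hcl v) hv
    have h2 : ‖v‖ ≤ 1/c := by
      rw [le_div_iff₀ hc]
      linarith
    calc ⟪g, v⟫ ≤ ‖g‖ * ‖v‖ := real_inner_le_norm g v
      _ ≤ ‖g‖ * (1/c) := mul_le_mul_of_nonneg_left h2 (norm_nonneg g)
  have hpair : ∀ v : E, ⟪g, v⟫ ≤ dnrm g * nrm v := by
    intro v
    rcases eq_or_ne v 0 with rfl | hv
    · simp [nrm_zero' hnrm_smul]
    · have hnv : 0 < nrm v := by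
        rcases eq_or_lt_of_le (hnonneg v) with h | h
        · exact absurd ((hnrm_zero v).mp h.symm) hv
        · exact h
      have hw : nrm ((nrm v)⁻¹ • v) ≤ 1 := by
        rw [hnrm_smul, abs_of_pos (inv_pos.mpr hnv), inv_mul_cancel₀ hnv.ne']
      have h1 : ⟪g, (nrm v)⁻¹ • v⟫ ≤ dnrm g := by
        rw [hdnrm]
        exact le_csSup hbdd ⟨_, hw, rfl⟩
      have h2 : ⟪g, v⟫ = nrm v * ⟪g, (nrm v)⁻¹ • v⟫ := by
        rw [real_inner_smul_right]
        field_simp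
      rw [h2]
      calc nrm v * ⟪g, (nrm v)⁻¹ • v⟫ ≤ nrm v * dnrm g :=
            mul_le_mul_of_nonneg_left h1 hnv.le
        _ = dnrm g * nrm v := mul_comm _ _
  have hchain : ℓ ≤ L * nrm (u - u') :=
    calc ℓ ≤ ⟪g, u - u'⟫ := hgℓ
      _ ≤ dnrm g * nrm (u - u') := hpair _
      _ ≤ L * nrm (u - u') := mul_le_mul_of_nonneg_right hgL (hnonneg _)
  have hL : 0 < L := by
    by_contra h
    push_neg at h
    nlinarith [hnonneg (u - u')]
  have hfirst : ℓ / L ≤ nrm (u - u') := by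
    rw [div_le_iff₀ hL]
    nlinarith [hchain]
  have hkey := key_gap Y hYne hYcv nrm hnrm_smul ω hωcont hωconv Yo hYo ω' hω'sub hstrong
    Y' hY'cv hY'Y u u' hu hu' humin
  have hsym : nrm (u' - u) = nrm (u - u') := by
    rw [← nrm_neg' hnrm_smul (u - u')]
    congr 1
    abel
  have hsq : (ℓ/L)^2 ≤ nrm (u - u')^2 := by
    apply pow_le_pow_left₀ (div_nonneg hℓ.le hL.le) hfirst
  have h5 : ℓ^2/(2*L^2) = (ℓ/L)^2/2 := by
    field_simp
  rw [hsym] at hkey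
  exact ⟨hL, hfirst, by rw [h5]; linarith⟩

/-- Per-phase step bound in the analysis of NERML: if `u ∈ Y°` minimizes `ω` over a closed
convex `Y' ⊆ Y` containing `u'` (so `⟨ω'(u), u' − u⟩ ≥ 0`) and `g` satisfies `‖g‖_* ≤ L`
and `⟨g, u − u'⟩ ≥ ℓ > 0`, then `‖u − u'‖ ≥ ℓ/L` and `ω(u') − ω(u) ≥ ℓ²/(2L²)`;
consequently a sequence of points in `Y` whose consecutive pairs satisfy these hypotheses
has length `T ≤ Ω²L²/ℓ² + 1`. -/
theorem stmt14
    {E : Type*} [NormedAddCommGroup E] [InnerProductSpace ℝ E] [FiniteDimensional ℝ E]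
    (Y : Set E) (hYne : Y.Nonempty) (hYcl : IsClosed Y)
    (hYbd : Bornology.IsBounded Y) (hYcv : Convex ℝ Y)
    (nrm : E → ℝ)
    (hnrm_add : ∀ u v, nrm (u + v) ≤ nrm u + nrm v)
    (hnrm_smul : ∀ (c : ℝ) (u : E), nrm (c • u) = |c| * nrm u)
    (hnrm_zero : ∀ u, nrm u = 0 ↔ u = 0)
    (dnrm : E → ℝ)
    (hdnrm : ∀ ξ : E, dnrm ξ = sSup {r : ℝ | ∃ u : E, nrm u ≤ 1 ∧ r = ⟪ξ, u⟫})
    (ω : E → ℝ) (hωcont : ContinuousOn ω Y) (hωconv : ConvexOn ℝ Y ω)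
    (Yo : Set E) (hYo : Yo = {y ∈ Y | ∃ s : E, ∀ z ∈ Y, ω y + ⟪s, z - y⟫ ≤ ω z})
    (ω' : E → E)
    (hω'sub : ∀ y ∈ Yo, ∀ z ∈ Y, ω y + ⟪ω' y, z - y⟫ ≤ ω z)
    (hω'cont : ContinuousOn ω' Yo)
    (hstrong : ∀ y ∈ Yo, ∀ y' ∈ Yo, nrm (y - y') ^ 2 ≤ ⟪ω' y - ω' y', y - y'⟫)
    (Ω : ℝ) (hΩ : Ω = Real.sqrt (2 * (sSup (ω '' Y) - sInf (ω '' Y))))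
    (L ℓ : ℝ) (hℓ : 0 < ℓ)
    -- the pair (u, u')
    (Y' : Set E) (hY'cl : IsClosed Y') (hY'cv : Convex ℝ Y') (hY'Y : Y' ⊆ Y)
    (u u' : E) (hu : u ∈ Y') (hu' : u' ∈ Y') (huYo : u ∈ Yo)
    (humin : IsMinOn ω Y' u)
    (hvi : 0 ≤ ⟪ω' u, u' - u⟫)
    (g : E) (hgL : dnrm g ≤ L) (hgℓ : ℓ ≤ ⟪g, u - u'⟫) :
    (ℓ / L ≤ nrm (u - u') ∧ ℓ ^ 2 / (2 * L ^ 2) ≤ ω u' - ω u) ∧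
    -- consecutive-pairs consequence
    (∀ (T : ℕ) (useq : ℕ → E),
      (∀ τ : ℕ, 1 ≤ τ → τ < T →
        useq τ ∈ Y ∧ useq (τ + 1) ∈ Y ∧ useq τ ∈ Yo ∧
        (∃ Y'' : Set E, IsClosed Y'' ∧ Convex ℝ Y'' ∧ Y'' ⊆ Y ∧
          useq τ ∈ Y'' ∧ useq (τ + 1) ∈ Y'' ∧ IsMinOn ω Y'' (useq τ)) ∧
        0 ≤ ⟪ω' (useq τ), useq (τ + 1) - useq τ⟫ ∧
        ∃ g' : E, dnrm g' ≤ L ∧ ℓ ≤ ⟪g', useq τ - useq (τ + 1)⟫) →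
      (T : ℝ) ≤ Ω ^ 2 * L ^ 2 / ℓ ^ 2 + 1) := by
  constructor
  · obtain ⟨-, h1, h2⟩ := step_lemma Y hYne hYcv nrm hnrm_add hnrm_smul hnrm_zero dnrm hdnrm
      ω hωcont hωconv Yo hYo ω' hω'sub hstrong L ℓ hℓ Y' hY'cv hY'Y u u' hu hu' humin
      g hgL hgℓ
    exact ⟨h1, h2⟩
  · intro T useq hyp
    have hRHS0 : 0 ≤ Ω ^ 2 * L ^ 2 / ℓ ^ 2 := by positivity
    by_cases hT1 : (T : ℝ) ≤ 1
    · linarith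
    push_neg at hT1
    have hT2 : 2 ≤ T := by
      have : 1 < T := by exact_mod_cast hT1
      omega
    have hstep : ∀ τ : ℕ, 1 ≤ τ → τ < T →
        0 < L ∧ ℓ ^ 2 / (2 * L ^ 2) ≤ ω (useq (τ + 1)) - ω (useq τ) := by
      intro τ h1 h2
      obtain ⟨hmY1, hmY2, hmYo, ⟨Y'', hcl'', hcv'', hsub'', hm1, hm2, hmin''⟩, hvi'', g', hgL', hgℓ'⟩ :=
        hyp τ h1 h2
      obtain ⟨hL, -, hgap⟩ := step_lemma Y hYne hYcv nrm hnrm_add hnrm_smul hnrm_zero dnrm hdnrm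
        ω hωcont hωconv Yo hYo ω' hω'sub hstrong L ℓ hℓ Y'' hcv'' hsub''
        (useq τ) (useq (τ + 1)) hm1 hm2 hmin'' g' hgL' hgℓ'
      exact ⟨hL, hgap⟩
    have hL : 0 < L := (hstep 1 le_rfl (by omega)).1
    have hcpt : IsCompact Y := Metric.isCompact_of_isClosed_isBounded hYcl hYbd
    have himg : IsCompact (ω '' Y) := hcpt.image_of_continuousOn hωcont
    have hbddA : BddAbove (ω '' Y) := himg.bddAbove
    have hbddB : BddBelow (ω '' Y) := himg.bddBelow
    have hu1Y : useq 1 ∈ Y := (hyp 1 le_rfl (by omega)).1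
    have huTY : useq T ∈ Y := by
      have h := (hyp (T - 1) (by omega) (by omega)).2.1
      have heq : T - 1 + 1 = T := by omega
      rwa [heq] at h
    have hsupb : ω (useq T) ≤ sSup (ω '' Y) := le_csSup hbddA ⟨_, huTY, rfl⟩
    have hsupb1 : ω (useq 1) ≤ sSup (ω '' Y) := le_csSup hbddA ⟨_, hu1Y, rfl⟩
    have hinfb : sInf (ω '' Y) ≤ ω (useq 1) := csInf_le hbddB ⟨_, hu1Y, rfl⟩
    set n : ℕ := T - 1 with hn
    have hnT : n + 1 = T := by omega
    set G : ℕ → ℝ := fun i => ω (useq (i + 1)) with hG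
    have htel : ∑ i ∈ Finset.range n, (G (i + 1) - G i) = G n - G 0 := Finset.sum_range_sub G n
    have hterm : ∀ i ∈ Finset.range n, ℓ ^ 2 / (2 * L ^ 2) ≤ G (i + 1) - G i := by
      intro i hi
      have hi' := Finset.mem_range.mp hi
      exact (hstep (i + 1) (by omega) (by omega)).2
    have hsum := Finset.card_nsmul_le_sum (Finset.range n) _ _ hterm
    rw [Finset.card_range, htel] at hsum
    have hsum' : (n : ℝ) * (ℓ ^ 2 / (2 * L ^ 2)) ≤ G n - G 0 := by
      simpa [nsmul_eq_mul] using hsum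
    have hGn : G n = ω (useq T) := by rw [hG]; simp only [hnT]
    have hG0 : G 0 = ω (useq 1) := rfl
    have hΩ2 : Ω ^ 2 = 2 * (sSup (ω '' Y) - sInf (ω '' Y)) := by
      rw [hΩ, Real.sq_sqrt]
      linarith
    rw [hGn, hG0] at hsum'
    have h6 : (n : ℝ) * (ℓ ^ 2 / (2 * L ^ 2)) ≤ sSup (ω '' Y) - sInf (ω '' Y) := by
      linarith
    have hid : 2 * L ^ 2 * ((n : ℝ) * (ℓ ^ 2 / (2 * L ^ 2))) = (n : ℝ) * ℓ ^ 2 := by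
      field_simp
    have h7 := mul_le_mul_of_nonneg_left h6 (by positivity : (0:ℝ) ≤ 2 * L ^ 2)
    rw [hid] at h7
    have hnb : (n : ℝ) ≤ Ω ^ 2 * L ^ 2 / ℓ ^ 2 := by
      rw [le_div_iff₀ (by positivity : (0:ℝ) < ℓ ^ 2)]
      calc (n : ℝ) * ℓ ^ 2 ≤ 2 * L ^ 2 * (sSup (ω '' Y) - sInf (ω '' Y)) := h7
        _ = Ω ^ 2 * L ^ 2 := by rw [hΩ2]; ring
    have hTn : (T : ℝ) = (n : ℝ) + 1 := by
      rw [← hnT]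
      push_cast
      ring
    linarith
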